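/- Let r, r' ∈ ℕ, a, b ∈ ℝ, and in R = ℝ[s,t] set Δ = (t−b)^{r'+1} and Δ' = (s−a)^{r+1}. Then the kernel of the R-module homomorphism R⁴ → R given by (p_1, p_2, p_3, p_4) ↦ (p_1 + p_2)·Δ + (p_3 + p_4)·Δ' is exactly the R-submodule of R⁴ generated by the three elements (1, −1, 0, 0), (0, 0, 1, −1) and (0, Δ', −Δ, 0). -/

import Mathlib

open MvPolynomial

private lemma prime_X1_sub_C (b : ℝ) : Prime (X 1 - C b : MvPolynomial (Fin 2) ℝ) := by
  rw [← MulEquiv.prime_iff (MvPolynomial.finSuccEquiv ℝ 1).toMulEquiv]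
  have h1 : (MvPolynomial.finSuccEquiv ℝ 1).toMulEquiv (X 1 - C b)
      = Polynomial.C (X 0 - C b : MvPolynomial (Fin 1) ℝ) := by
    show (MvPolynomial.finSuccEquiv ℝ 1) (X 1 - C b) = _
    have h0 : (1 : Fin 2) = Fin.succ 0 := rfl
    rw [map_sub, h0, MvPolynomial.finSuccEquiv_X_succ, MvPolynomial.finSuccEquiv_apply,
      MvPolynomial.eval₂Hom_C, map_sub]
    rfl
  rw [h1, Polynomial.prime_C_iff]
  rw [← MulEquiv.prime_iff (MvPolynomial.finSuccEquiv ℝ 0).toMulEquiv]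
  have h2 : (MvPolynomial.finSuccEquiv ℝ 0).toMulEquiv (X 0 - C b)
      = Polynomial.X - Polynomial.C (C b) := by
    show (MvPolynomial.finSuccEquiv ℝ 0) (X 0 - C b) = _
    rw [map_sub, MvPolynomial.finSuccEquiv_X_zero, MvPolynomial.finSuccEquiv_apply,
      MvPolynomial.eval₂Hom_C]
    rfl
  rw [h2]
  exact Polynomial.prime_X_sub_C _

private lemma not_dvd_X0 (a b : ℝ) :
    ¬ (X 1 - C b : MvPolynomial (Fin 2) ℝ) ∣ (X 0 - C a) := by
  intro h
  have := (MvPolynomial.eval (fun i : Fin 2 => if i = 0 then a + 1 else b)).map_dvd h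
  simp at this

/-- with `R = ℝ[s,t]`, `Δ = (t-b)^{r'+1}` and `Δ' = (s-a)^{r+1}`, the kernel of
the `R`-module map `R⁴ → R`, `(p₁,p₂,p₃,p₄) ↦ (p₁+p₂)Δ + (p₃+p₄)Δ'` is exactly the
`R`-submodule of `R⁴` generated by `(1,-1,0,0)`, `(0,0,1,-1)` and `(0,Δ',-Δ,0)`. -/
theorem kernel_vertex_map_eq_span (r r' : ℕ) (a b : ℝ) :
    ∀ p : Fin 4 → MvPolynomial (Fin 2) ℝ,
      (p 0 + p 1) * (X 1 - C b) ^ (r' + 1) + (p 2 + p 3) * (X 0 - C a) ^ (r + 1) = 0 ↔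
        p ∈ Submodule.span (MvPolynomial (Fin 2) ℝ)
          ({![1, -1, 0, 0], ![0, 0, 1, -1],
            ![0, (X 0 - C a) ^ (r + 1), -((X 1 - C b) ^ (r' + 1)), 0]} :
            Set (Fin 4 → MvPolynomial (Fin 2) ℝ)) := by
  intro p
  have hprime : Prime (X 1 - C b : MvPolynomial (Fin 2) ℝ) := prime_X1_sub_C b
  constructor
  · intro heq
    have hdvd : (X 1 - C b) ^ (r' + 1) ∣ (p 2 + p 3) * (X 0 - C a) ^ (r + 1) := by
      refine ⟨-(p 0 + p 1), ?_⟩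
      linear_combination heq
    have hnd' : ¬ (X 1 - C b : MvPolynomial (Fin 2) ℝ) ∣ (X 0 - C a) ^ (r + 1) := by
      intro h
      exact not_dvd_X0 a b (hprime.dvd_of_dvd_pow h)
    obtain ⟨q, hq⟩ := hprime.pow_dvd_of_dvd_mul_right _ hnd' hdvd
    have hΔne : ((X 1 - C b : MvPolynomial (Fin 2) ℝ)) ^ (r' + 1) ≠ 0 :=
      pow_ne_zero _ hprime.ne_zero
    have hq2 : p 0 + p 1 = -(q * (X 0 - C a) ^ (r + 1)) := by
      have h3 : (p 0 + p 1 + q * (X 0 - C a) ^ (r + 1)) * (X 1 - C b) ^ (r' + 1) = 0 := by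
        linear_combination heq - (X 0 - C a) ^ (r + 1) * hq
      rcases mul_eq_zero.mp h3 with h | h
      · linear_combination h
      · exact absurd h hΔne
    have hrep : p = (p 0) • ![1, -1, 0, 0] + (-(p 3)) • ![0, 0, 1, -1]
        + (-q) • ![0, (X 0 - C a) ^ (r + 1), -((X 1 - C b) ^ (r' + 1)), 0] := by
      funext i
      fin_cases i
      · simp
      · simp only [Pi.add_apply, Pi.smul_apply, smul_eq_mul]
        norm_num
        linear_combination hq2
      · simp only [Pi.add_apply, Pi.smul_apply, smul_eq_mul]
        norm_num
        rw [show (⟨2, by omega⟩ : Fin 4) = 2 from rfl]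
        linear_combination hq
      · simp
    rw [hrep]
    refine Submodule.add_mem _ (Submodule.add_mem _ ?_ ?_) ?_ <;>
      refine Submodule.smul_mem _ _ (Submodule.subset_span ?_) <;> simp
  · intro hmem
    let φ : (Fin 4 → MvPolynomial (Fin 2) ℝ) →ₗ[MvPolynomial (Fin 2) ℝ] MvPolynomial (Fin 2) ℝ :=
      { toFun := fun v => (v 0 + v 1) * (X 1 - C b) ^ (r' + 1)
          + (v 2 + v 3) * (X 0 - C a) ^ (r + 1)
        map_add' := fun u v => by simp only [Pi.add_apply]; ring
        map_smul' := fun c v => by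
          simp only [Pi.smul_apply, smul_eq_mul, RingHom.id_apply]; ring }
    have hle : Submodule.span (MvPolynomial (Fin 2) ℝ)
        ({![1, -1, 0, 0], ![0, 0, 1, -1],
          ![0, (X 0 - C a) ^ (r + 1), -((X 1 - C b) ^ (r' + 1)), 0]} :
          Set (Fin 4 → MvPolynomial (Fin 2) ℝ))
        ≤ LinearMap.ker φ := by
      rw [Submodule.span_le]
      intro v hv
      simp only [Set.mem_insert_iff, Set.mem_singleton_iff] at hv
      rcases hv with rfl | rfl | rfl <;>
        · simp only [LinearMap.mem_ker, SetLike.mem_coe, φ, LinearMap.coe_mk, AddHom.coe_mk,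
            Matrix.cons_val_zero, Matrix.cons_val_one, Matrix.head_cons, Matrix.cons_val_two,
            Matrix.tail_cons, Matrix.cons_val_three]
          ring
    have := hle hmem
    simpa [φ, LinearMap.mem_ker] using this
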